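/- Let n be a natural number with n ≥ 2. There exists an n-generated selfdual lattice that has no atom if and only if n ≥ 4. -/

import Mathlib

/-- A set has exactly two elements. -/
def TwoElem {α : Type*} (s : Set α) : Prop := ∃ x y : α, x ≠ y ∧ s = {x, y}

/-- `a` is an atom of the lattice `L`: the principal ideal `↓a` has exactly two elements. -/
def IsAtomOf {L : Type*} [Lattice L] (a : L) : Prop := TwoElem (Set.Iic a)

/-- `G` generates the lattice `L`: `G` is contained in no proper sublattice, that is,
the sublattice generated by `G` is all of `L`. -/
def GeneratesLat {L : Type*} [Lattice L] (G : Set L) : Prop :=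
  latticeClosure G = Set.univ

/-- A lattice is selfdual if it admits a dual automorphism, i.e. an order-reversing
bijection of the lattice onto itself. -/
def IsSelfdual (L : Type*) [Lattice L] : Prop :=
  ∃ f : L ≃ L, ∀ x y : L, x ≤ y ↔ f y ≤ f x


namespace Czedli

/-- The 4-generated selfdual atomless lattice. -/
inductive CzL : Type
  | bot | top | A | B | As | Bs
  | T (n : ℕ) | V (n : ℕ) | Ts (n : ℕ) | Vs (n : ℕ)
deriving DecidableEq

namespace CzL

/-- minimal `l ≥ k` with `l % 3 = i` (for `i < 3`). -/
def σ (i k : ℕ) : ℕ := k + (i + 3 - k % 3) % 3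

/-- the order relation -/
def le : CzL → CzL → Prop
  | bot, _ => True
  | _, top => True
  | A, A => True
  | A, Ts _ => True
  | A, Vs _ => True
  | B, B => True
  | B, Ts l => l % 3 = 2
  | T m, A => m % 3 = 0
  | T m, B => m % 3 = 1
  | T m, Bs => m % 3 = 2
  | T m, T m' => m = m' ∨ (m % 3 = m' % 3 ∧ m' ≤ m)
  | T m, V k => k ≤ m
  | T _, As => True
  | T _, Ts _ => True
  | T _, Vs _ => True
  | V k, V j => j ≤ k
  | V _, As => True
  | V _, Ts _ => True
  | V _, Vs _ => True
  | As, As => True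
  | As, Ts l => l % 3 = 0
  | Bs, Bs => True
  | Bs, Ts l => l % 3 = 1
  | Ts l, Ts l' => l = l' ∨ (l % 3 = l' % 3 ∧ l ≤ l')
  | Vs j, Vs j' => j ≤ j'
  | Vs j, Ts l => j ≤ l
  | _, _ => False

instance : LE CzL := ⟨le⟩

lemma le_def (x y : CzL) : (x ≤ y) = le x y := rfl

instance decLe : ∀ x y : CzL, Decidable (x ≤ y) := by
  intro x y
  cases x <;> cases y <;> simp only [le_def, le] <;> infer_instance

lemma le_refl' (x : CzL) : x ≤ x := by
  cases x <;> simp [le_def, le]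

lemma le_trans' (x y z : CzL) : x ≤ y → y ≤ z → x ≤ z := by
  intro h1 h2
  cases x <;> cases y <;> cases z <;>
    simp only [le_def, le] at h1 h2 ⊢ <;> omega

lemma le_antisymm' (x y : CzL) : x ≤ y → y ≤ x → x = y := by
  intro h1 h2
  cases x <;> cases y <;>
    simp only [le_def, le, T.injEq, V.injEq, Ts.injEq, Vs.injEq] at h1 h2 ⊢ <;> omega

instance : PartialOrder CzL where
  le_refl := le_refl'
  le_trans := le_trans'
  le_antisymm := le_antisymm'

end CzL
end Czedli

namespace Czedli
namespace CzL

/-- binary infimum -/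
def inf : CzL → CzL → CzL
  | bot, _ => bot
  | _, bot => bot
  | top, y => y
  | x, top => x
  | A, A => A
  | A, B => bot
  | A, As => T 0
  | A, Bs => bot
  | A, T m => if m % 3 = 0 then T m else bot
  | A, V k => T (σ 0 k)
  | A, Ts _ => A
  | A, Vs _ => A
  | B, A => bot
  | B, B => B
  | B, As => T 1
  | B, Bs => bot
  | B, T m => if m % 3 = 1 then T m else bot
  | B, V k => T (σ 1 k)
  | B, Ts l => if l % 3 = 2 then B else T 1
  | B, Vs _ => T 1
  | As, A => T 0
  | As, B => T 1
  | As, As => As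
  | As, Bs => T 2
  | As, T m => T m
  | As, V k => V k
  | As, Ts l => if l % 3 = 0 then As else V 0
  | As, Vs _ => V 0
  | Bs, A => bot
  | Bs, B => bot
  | Bs, As => T 2
  | Bs, Bs => Bs
  | Bs, T m => if m % 3 = 2 then T m else bot
  | Bs, V k => T (σ 2 k)
  | Bs, Ts l => if l % 3 = 1 then Bs else T 2
  | Bs, Vs _ => T 2
  | T m, A => if m % 3 = 0 then T m else bot
  | T m, B => if m % 3 = 1 then T m else bot
  | T m, As => T m
  | T m, Bs => if m % 3 = 2 then T m else bot
  | T m, T m' => if m % 3 = m' % 3 then T (max m m') else bot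
  | T m, V k => if k ≤ m then T m else T (σ (m % 3) k)
  | T m, Ts _ => T m
  | T m, Vs _ => T m
  | V k, A => T (σ 0 k)
  | V k, B => T (σ 1 k)
  | V k, As => V k
  | V k, Bs => T (σ 2 k)
  | V k, T m => if k ≤ m then T m else T (σ (m % 3) k)
  | V k, V j => V (max k j)
  | V k, Ts _ => V k
  | V k, Vs _ => V k
  | Ts l, A => A
  | Ts l, B => if l % 3 = 2 then B else T 1
  | Ts l, As => if l % 3 = 0 then As else V 0
  | Ts l, Bs => if l % 3 = 1 then Bs else T 2
  | Ts _, T m => T m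
  | Ts _, V k => V k
  | Ts l, Ts l' => if l % 3 = l' % 3 then Ts (min l l') else Vs (min l l')
  | Ts l, Vs j => Vs (min l j)
  | Vs _, A => A
  | Vs _, B => T 1
  | Vs _, As => V 0
  | Vs _, Bs => T 2
  | Vs _, T m => T m
  | Vs _, V k => V k
  | Vs j, Ts l => Vs (min l j)
  | Vs j, Vs j' => Vs (min j j')

lemma inf_le_left' (x y : CzL) : inf x y ≤ x := by
  cases x <;> cases y <;>
    simp only [inf, σ] <;> (try split) <;> (try simp [le_def, le]) <;> (try omega)

lemma inf_le_right' (x y : CzL) : inf x y ≤ y := by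
  cases x <;> cases y <;>
    simp only [inf, σ] <;> (try split) <;> (try simp [le_def, le]) <;> (try omega)

lemma le_inf' (z x y : CzL) : z ≤ x → z ≤ y → z ≤ inf x y := by
  intro h1 h2
  cases z <;> cases x <;> cases y <;>
    simp only [inf, σ] <;> (try split) <;>
    (try simp [le_def, le] at h1 h2 ⊢) <;> (try omega)

/-- the dual automorphism -/
def dual : CzL → CzL
  | bot => top
  | top => bot
  | A => As
  | B => Bs
  | As => A
  | Bs => B
  | T n => Ts n
  | V n => Vs n
  | Ts n => T n
  | Vs n => V n

@[simp] lemma dual_dual (x : CzL) : dual (dual x) = x := by cases x <;> rfl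

lemma dual_le_dual (x y : CzL) : dual y ≤ dual x ↔ x ≤ y := by
  cases x <;> cases y <;> simp only [le_def, le, dual] <;> omega

def sup (x y : CzL) : CzL := dual (inf (dual x) (dual y))

lemma le_sup_left' (x y : CzL) : x ≤ sup x y := by
  rw [← dual_le_dual]; simpa [sup] using inf_le_left' (dual x) (dual y)

lemma le_sup_right' (x y : CzL) : y ≤ sup x y := by
  rw [← dual_le_dual]; simpa [sup] using inf_le_right' (dual x) (dual y)

lemma sup_le' (x y z : CzL) : x ≤ z → y ≤ z → sup x y ≤ z := by
  intro h1 h2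
  rw [← dual_le_dual]
  simpa [sup] using le_inf' (dual z) (dual x) (dual y)
    ((dual_le_dual _ _).2 h1) ((dual_le_dual _ _).2 h2)

instance : Lattice CzL where
  inf := inf
  sup := sup
  inf_le_left := inf_le_left'
  inf_le_right := inf_le_right'
  le_inf := fun z x y h1 h2 => le_inf' z x y h1 h2
  le_sup_left := le_sup_left'
  le_sup_right := le_sup_right'
  sup_le := fun x y z h1 h2 => sup_le' x y z h1 h2

end CzL
end Czedli
namespace Czedli
namespace CzL

lemma dual_inf (x y : CzL) : dual (inf x y) = sup (dual x) (dual y) := by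
  simp [sup]

lemma dual_sup (x y : CzL) : dual (sup x y) = inf (dual x) (dual y) := by
  simp [sup]

lemma inf_eq (x y : CzL) : x ⊓ y = inf x y := rfl
lemma sup_eq (x y : CzL) : x ⊔ y = sup x y := rfl

/-- selfduality -/
lemma isSelfdual : ∃ f : CzL ≃ CzL, ∀ x y : CzL, x ≤ y ↔ f y ≤ f x := by
  refine ⟨⟨dual, dual, dual_dual, dual_dual⟩, fun x y => ?_⟩
  simpa using (dual_le_dual x y).symm

/-- two witnesses strictly below any non-bot element -/
def w1 : CzL → CzL
  | bot => bot
  | top => A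
  | A => T 0
  | B => T 1
  | As => T 0
  | Bs => T 2
  | T l => T (l + 3)
  | V k => T k
  | Ts _ => V 0
  | Vs _ => V 0

def w2 : CzL → CzL
  | bot => bot
  | top => B
  | A => T 3
  | B => T 4
  | As => T 3
  | Bs => T 5
  | T l => T (l + 6)
  | V k => T (k + 1)
  | Ts _ => V 1
  | Vs _ => V 1

lemma w1_le (a : CzL) : w1 a ≤ a := by
  cases a <;> simp [w1, le_def, le]

lemma w2_le (a : CzL) : w2 a ≤ a := by
  cases a <;> simp [w2, le_def, le] <;> (try omega)

lemma w_distinct (a : CzL) (h : a ≠ bot) :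
    w1 a ≠ w2 a ∧ w1 a ≠ a ∧ w2 a ≠ a := by
  cases a <;> simp_all [w1, w2] <;> (try omega)

lemma le_bot_iff' (a : CzL) : a ≤ bot ↔ a = bot := by
  cases a <;> simp [le_def, le]

/-- no atoms -/
lemma noAtoms (a : CzL) : ¬ ∃ x y : CzL, x ≠ y ∧ Set.Iic a = {x, y} := by
  rintro ⟨x, y, hxy, hset⟩
  by_cases hb : a = bot
  · subst hb
    have hx : x ∈ Set.Iic (bot : CzL) := by rw [hset]; simp
    have hy : y ∈ Set.Iic (bot : CzL) := by rw [hset]; simp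
    rw [Set.mem_Iic, le_bot_iff'] at hx hy
    exact hxy (hx.trans hy.symm)
  · obtain ⟨h12, h1a, h2a⟩ := w_distinct a hb
    have m0 : a ∈ ({x, y} : Set CzL) := by rw [← hset]; simp
    have m1 : w1 a ∈ ({x, y} : Set CzL) := by rw [← hset]; exact w1_le a
    have m2 : w2 a ∈ ({x, y} : Set CzL) := by rw [← hset]; exact w2_le a
    simp only [Set.mem_insert_iff, Set.mem_singleton_iff] at m0 m1 m2
    rcases m0 with rfl | rfl <;> rcases m1 with h1 | h1 <;> rcases m2 with h2 | h2 <;>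
      simp_all

/-! ## Generation -/

def cl : Set CzL := latticeClosure {A, B, As, Bs}

lemma memA : A ∈ cl := subset_latticeClosure (by simp)
lemma memB : B ∈ cl := subset_latticeClosure (by simp)
lemma memAs : As ∈ cl := subset_latticeClosure (by simp)
lemma memBs : Bs ∈ cl := subset_latticeClosure (by simp)

lemma inf_mem {x y : CzL} (hx : x ∈ cl) (hy : y ∈ cl) : inf x y ∈ cl :=
  (isSublattice_latticeClosure (s := {A, B, As, Bs})).infClosed hx hy

lemma sup_mem {x y : CzL} (hx : x ∈ cl) (hy : y ∈ cl) : sup x y ∈ cl :=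
  (isSublattice_latticeClosure (s := {A, B, As, Bs})).supClosed hx hy

lemma dual_mem {x : CzL} (hx : x ∈ cl) : dual x ∈ cl := by
  have hsub : IsSublattice {u : CzL | dual u ∈ cl} := by
    constructor
    · intro a ha b hb
      have : dual (sup a b) ∈ cl := by rw [dual_sup]; exact inf_mem ha hb
      exact this
    · intro a ha b hb
      have : dual (inf a b) ∈ cl := by rw [dual_inf]; exact sup_mem ha hb
      exact this
  have : cl ⊆ {u : CzL | dual u ∈ cl} := by
    apply latticeClosure_min _ hsub
    rintro u hu
    simp only [Set.mem_insert_iff, Set.mem_singleton_iff] at hu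
    rcases hu with rfl | rfl | rfl | rfl
    · exact memAs
    · exact memBs
    · exact memA
    · exact memB
  exact this hx

lemma memT0 : T 0 ∈ cl := inf_mem memA memAs
lemma memT1 : T 1 ∈ cl := inf_mem memB memAs
lemma memT2 : T 2 ∈ cl := inf_mem memAs memBs

lemma sup_TT (a : ℕ) : sup (T a) (T (a + 1)) = V a := by
  simp only [sup, dual, inf]
  rw [if_neg (by omega)]
  simp [dual]

lemma memT3 : ∀ l, T l ∈ cl ∧ T (l + 1) ∈ cl ∧ T (l + 2) ∈ cl := by
  intro l
  induction l with
  | zero => exact ⟨memT0, memT1, memT2⟩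
  | succ n ih =>
    refine ⟨ih.2.1, ih.2.2, ?_⟩
    have hV : V (n + 1) ∈ cl := by
      rw [← sup_TT]; exact sup_mem ih.2.1 ih.2.2
    have h3 : n % 3 = 0 ∨ n % 3 = 1 ∨ n % 3 = 2 := by omega
    rcases h3 with h | h | h
    · have : inf A (V (n + 1)) = T (n + 1 + 2) := by
        simp only [inf, σ]; congr 1; omega
      rw [← this]; exact inf_mem memA hV
    · have : inf B (V (n + 1)) = T (n + 1 + 2) := by
        simp only [inf, σ]; congr 1; omega
      rw [← this]; exact inf_mem memB hV
    · have : inf Bs (V (n + 1)) = T (n + 1 + 2) := by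
        simp only [inf, σ]; congr 1; omega
      rw [← this]; exact inf_mem memBs hV

lemma memT (l : ℕ) : T l ∈ cl := (memT3 l).1

lemma memV (k : ℕ) : V k ∈ cl := by
  rw [← sup_TT]; exact sup_mem (memT k) (memT (k + 1))

lemma mem_all (x : CzL) : x ∈ cl := by
  cases x with
  | bot => have : inf A B = bot := rfl
           rw [← this]; exact inf_mem memA memB
  | top => have : dual bot ∈ cl := dual_mem (by
              have : inf A B = bot := rfl
              rw [← this]; exact inf_mem memA memB)
           simpa [dual] using this
  | A => exact memA
  | B => exact memB
  | As => exact memAs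
  | Bs => exact memBs
  | T l => exact memT l
  | V k => exact memV k
  | Ts l => simpa [dual] using dual_mem (memT l)
  | Vs k => simpa [dual] using dual_mem (memV k)

lemma generates : latticeClosure ({A, B, As, Bs} : Set CzL) = Set.univ :=
  Set.eq_univ_of_forall mem_all

end CzL
end Czedli

namespace Czedli

section Forward
variable {L : Type*} [Lattice L]

/-- the key invariant: in a lattice generated by `{x,y,z}`, every element is
above `x ⊓ y` or below `z`. -/
lemma pair_invariant {x y z : L} (hgen : latticeClosure ({x, y, z} : Set L) = Set.univ)
    (u : L) : x ⊓ y ≤ u ∨ u ≤ z := by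
  have hS : IsSublattice {u : L | x ⊓ y ≤ u ∨ u ≤ z} := by
    constructor
    · rintro a (ha | ha) b hb
      · exact Or.inl (ha.trans le_sup_left)
      · rcases hb with hb | hb
        · exact Or.inl (hb.trans le_sup_right)
        · exact Or.inr (sup_le ha hb)
    · rintro a ha b hb
      rcases ha with ha | ha
      · rcases hb with hb | hb
        · exact Or.inl (le_inf ha hb)
        · exact Or.inr (inf_le_right.trans hb)
      · exact Or.inr (inf_le_left.trans ha)
  have hsub : ({x, y, z} : Set L) ⊆ {u : L | x ⊓ y ≤ u ∨ u ≤ z} := by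
    rintro u hu
    simp only [Set.mem_insert_iff, Set.mem_singleton_iff] at hu
    rcases hu with rfl | rfl | rfl
    · exact Or.inl inf_le_left
    · exact Or.inl inf_le_right
    · exact Or.inr le_rfl
  have := latticeClosure_min hsub hS
  rw [hgen] at this
  exact this (Set.mem_univ u)

/-- everything is above the meet of the generators -/
lemma bot_invariant {x y z : L} (hgen : latticeClosure ({x, y, z} : Set L) = Set.univ)
    (u : L) : x ⊓ y ⊓ z ≤ u := by
  have hS : IsSublattice {u : L | x ⊓ y ⊓ z ≤ u} := by
    constructor
    · intro a ha b _; exact ha.trans le_sup_left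
    · intro a ha b hb; exact le_inf ha hb
  have hsub : ({x, y, z} : Set L) ⊆ {u : L | x ⊓ y ⊓ z ≤ u} := by
    rintro u hu
    simp only [Set.mem_insert_iff, Set.mem_singleton_iff] at hu
    rcases hu with rfl | rfl | rfl
    · exact inf_le_left.trans inf_le_left
    · exact inf_le_left.trans inf_le_right
    · exact inf_le_right
  have := latticeClosure_min hsub hS
  rw [hgen] at this
  exact this (Set.mem_univ u)

/-- if `x ⊓ y` is not the bottom `x ⊓ y ⊓ z`, it is an atom -/
lemma atom_of_meet_ne {x y z : L} (hgen : latticeClosure ({x, y, z} : Set L) = Set.univ)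
    (hne : x ⊓ y ⊓ z ≠ x ⊓ y) : IsAtomOf (x ⊓ y) := by
  refine ⟨x ⊓ y ⊓ z, x ⊓ y, hne, ?_⟩
  ext u
  simp only [Set.mem_Iic, Set.mem_insert_iff, Set.mem_singleton_iff]
  constructor
  · intro hu
    rcases pair_invariant hgen u with h | h
    · exact Or.inr (le_antisymm hu h)
    · exact Or.inl (le_antisymm (le_inf hu h) (bot_invariant hgen u))
  · rintro (rfl | rfl)
    · exact inf_le_left
    · exact le_rfl

/-- dual versions -/
lemma pair_invariant' {x y z : L} (hgen : latticeClosure ({x, y, z} : Set L) = Set.univ)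
    (u : L) : u ≤ x ⊔ y ∨ z ≤ u := by
  have hS : IsSublattice {u : L | u ≤ x ⊔ y ∨ z ≤ u} := by
    constructor
    · rintro a ha b hb
      rcases ha with ha | ha
      · rcases hb with hb | hb
        · exact Or.inl (sup_le ha hb)
        · exact Or.inr (hb.trans le_sup_right)
      · exact Or.inr (ha.trans le_sup_left)
    · rintro a (ha | ha) b hb
      · exact Or.inl (inf_le_left.trans ha)
      · rcases hb with hb | hb
        · exact Or.inl (inf_le_right.trans hb)
        · exact Or.inr (le_inf ha hb)
  have hsub : ({x, y, z} : Set L) ⊆ {u : L | u ≤ x ⊔ y ∨ z ≤ u} := by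
    rintro u hu
    simp only [Set.mem_insert_iff, Set.mem_singleton_iff] at hu
    rcases hu with rfl | rfl | rfl
    · exact Or.inl le_sup_left
    · exact Or.inl le_sup_right
    · exact Or.inr le_rfl
  have := latticeClosure_min hsub hS
  rw [hgen] at this
  exact this (Set.mem_univ u)

lemma top_invariant {x y z : L} (hgen : latticeClosure ({x, y, z} : Set L) = Set.univ)
    (u : L) : u ≤ x ⊔ y ⊔ z := by
  have hS : IsSublattice {u : L | u ≤ x ⊔ y ⊔ z} := by
    constructor
    · intro a ha b hb; exact sup_le ha hb
    · intro a ha b _; exact inf_le_left.trans ha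
  have hsub : ({x, y, z} : Set L) ⊆ {u : L | u ≤ x ⊔ y ⊔ z} := by
    rintro u hu
    simp only [Set.mem_insert_iff, Set.mem_singleton_iff] at hu
    rcases hu with rfl | rfl | rfl
    · exact le_sup_left.trans le_sup_left
    · exact le_sup_right.trans le_sup_left
    · exact le_sup_right
  have := latticeClosure_min hsub hS
  rw [hgen] at this
  exact this (Set.mem_univ u)

lemma coatom_of_join_ne {x y z : L} (hgen : latticeClosure ({x, y, z} : Set L) = Set.univ)
    (hne : x ⊔ y ≠ x ⊔ y ⊔ z) : TwoElem (Set.Ici (x ⊔ y)) := by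
  refine ⟨x ⊔ y, x ⊔ y ⊔ z, hne, ?_⟩
  ext u
  simp only [Set.mem_Ici, Set.mem_insert_iff, Set.mem_singleton_iff]
  constructor
  · intro hu
    rcases pair_invariant' hgen u with h | h
    · exact Or.inl (le_antisymm h hu)
    · exact Or.inr (le_antisymm (top_invariant hgen u) (sup_le hu h))
  · rintro (rfl | rfl)
    · exact le_rfl
    · exact le_sup_left

/-- a selfdual lattice with a coatom has an atom -/
lemma atom_of_coatom {a : L} (hsd : IsSelfdual L) (h : TwoElem (Set.Ici a)) :
    ∃ b : L, IsAtomOf b := by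
  obtain ⟨f, hf⟩ := hsd
  obtain ⟨u, v, huv, hset⟩ := h
  refine ⟨f a, f u, f v, fun h' => huv (f.injective h'), ?_⟩
  have key : ∀ w : L, w ≤ f a ↔ a ≤ f.symm w := by
    intro w
    constructor
    · intro hw
      have := (hf a (f.symm w)).2
      apply this
      simpa using hw
    · intro hw
      have := (hf a (f.symm w)).1 hw
      simpa using this
  ext w
  simp only [Set.mem_Iic, Set.mem_insert_iff, Set.mem_singleton_iff]
  rw [key w]
  have : f.symm w ∈ Set.Ici a ↔ f.symm w = u ∨ f.symm w = v := by
    rw [hset]; simp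
  rw [Set.mem_Ici] at this
  rw [this]
  constructor
  · rintro (h' | h')
    · left; rw [← h']; simp
    · right; rw [← h']; simp
  · rintro (rfl | rfl) <;> simp

end Forward
end Czedli

namespace Czedli
section Impossible
variable {L : Type*} [Lattice L]

lemma no_two {x y : L} (hne : x ≠ y)
    (hgen : latticeClosure ({x, y} : Set L) = Set.univ)
    (hat : ∀ a : L, ¬ IsAtomOf a) : False := by
  have hxy : ({x, x, y} : Set L) = {x, y} := by
    ext u; simp
  have hyx : ({y, y, x} : Set L) = {x, y} := by
    ext u; simp; tauto
  by_cases h1 : x ⊓ y = x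
  · by_cases h2 : y ⊓ x = y
    · exact hne (le_antisymm (inf_eq_left.1 h1) (inf_eq_left.1 h2))
    · refine hat (y ⊓ y) (atom_of_meet_ne (z := x) (by rw [hyx]; exact hgen) ?_)
      simp only [inf_idem]
      exact fun h => h2 h
  · refine hat (x ⊓ x) (atom_of_meet_ne (z := y) (by rw [hxy]; exact hgen) ?_)
    simp only [inf_idem]
    exact fun h => h1 h

lemma no_three {x y z : L} (hxy : x ≠ y) (hxz : x ≠ z) (hyz : y ≠ z)
    (hgen : latticeClosure ({x, y, z} : Set L) = Set.univ)
    (hsd : IsSelfdual L)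
    (hat : ∀ a : L, ¬ IsAtomOf a) : False := by
  have hperm1 : ({x, z, y} : Set L) = {x, y, z} := by ext u; simp; tauto
  have hperm2 : ({y, z, x} : Set L) = {x, y, z} := by ext u; simp; tauto
  have hgen1 : latticeClosure ({x, z, y} : Set L) = Set.univ := by rw [hperm1]; exact hgen
  have hgen2 : latticeClosure ({y, z, x} : Set L) = Set.univ := by rw [hperm2]; exact hgen
  -- all pairwise meets must be the bottom
  by_cases e1 : x ⊓ y ⊓ z = x ⊓ y
  swap
  · exact hat _ (atom_of_meet_ne hgen e1)
  by_cases e2 : x ⊓ z ⊓ y = x ⊓ z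
  swap
  · exact hat _ (atom_of_meet_ne hgen1 e2)
  by_cases e3 : y ⊓ z ⊓ x = y ⊓ z
  swap
  · exact hat _ (atom_of_meet_ne hgen2 e3)
  -- all pairwise joins must be the top
  by_cases f1 : x ⊔ y = x ⊔ y ⊔ z
  swap
  · obtain ⟨b, hb⟩ := atom_of_coatom hsd (coatom_of_join_ne hgen f1)
    exact hat b hb
  by_cases f2 : x ⊔ z = x ⊔ z ⊔ y
  swap
  · obtain ⟨b, hb⟩ := atom_of_coatom hsd (coatom_of_join_ne hgen1 f2)
    exact hat b hb
  by_cases f3 : y ⊔ z = y ⊔ z ⊔ x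
  swap
  · obtain ⟨b, hb⟩ := atom_of_coatom hsd (coatom_of_join_ne hgen2 f3)
    exact hat b hb
  -- now the lattice is {⊥, x, y, z, ⊤}
  set m := x ⊓ y ⊓ z with hm
  set J := x ⊔ y ⊔ z with hJ
  have hmin : ∀ u : L, m ≤ u := bot_invariant hgen
  have hmax : ∀ u : L, u ≤ J := top_invariant hgen
  have hm1 : ∀ u : L, m ⊔ u = u := fun u => sup_eq_right.2 (hmin u)
  have hm2 : ∀ u : L, u ⊔ m = u := fun u => sup_eq_left.2 (hmin u)
  have hJ1 : ∀ u : L, u ⊔ J = J := fun u => sup_eq_right.2 (hmax u)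
  have hJ2 : ∀ u : L, J ⊔ u = J := fun u => sup_eq_left.2 (hmax u)
  have hm1' : ∀ u : L, m ⊓ u = m := fun u => inf_eq_left.2 (hmin u)
  have hm2' : ∀ u : L, u ⊓ m = m := fun u => inf_eq_right.2 (hmin u)
  have hJ1' : ∀ u : L, u ⊓ J = u := fun u => inf_eq_left.2 (hmax u)
  have hJ2' : ∀ u : L, J ⊓ u = u := fun u => inf_eq_right.2 (hmax u)
  have sxy : x ⊔ y = J := f1
  have sxz : x ⊔ z = J := by rw [f2, hJ]; exact sup_right_comm x z y
  have syz : y ⊔ z = J := by rw [f3, hJ, sup_comm (y ⊔ z) x, ← sup_assoc]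
  have syx : y ⊔ x = J := by rw [sup_comm]; exact sxy
  have szx : z ⊔ x = J := by rw [sup_comm]; exact sxz
  have szy : z ⊔ y = J := by rw [sup_comm]; exact syz
  have ixy : x ⊓ y = m := e1.symm
  have ixz : x ⊓ z = m := by rw [← e2, hm]; exact inf_right_comm x z y
  have iyz : y ⊓ z = m := by rw [← e3, hm, inf_comm (y ⊓ z) x, ← inf_assoc]
  have iyx : y ⊓ x = m := by rw [inf_comm]; exact ixy
  have izx : z ⊓ x = m := by rw [inf_comm]; exact ixz
  have izy : z ⊓ y = m := by rw [inf_comm]; exact iyz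
  have hS : IsSublattice ({m, x, y, z, J} : Set L) := by
    constructor
    · rintro a ha b hb
      simp only [Set.mem_insert_iff, Set.mem_singleton_iff] at ha hb ⊢
      rcases ha with rfl | rfl | rfl | rfl | rfl <;> rcases hb with rfl | rfl | rfl | rfl | rfl <;>
        simp [hm1, hm2, hJ1, hJ2, sxy, sxz, syz, syx, szx, szy]
    · rintro a ha b hb
      simp only [Set.mem_insert_iff, Set.mem_singleton_iff] at ha hb ⊢
      rcases ha with rfl | rfl | rfl | rfl | rfl <;> rcases hb with rfl | rfl | rfl | rfl | rfl <;>
        simp [hm1', hm2', hJ1', hJ2', ixy, ixz, iyz, iyx, izx, izy]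
  have hall : ∀ u : L, u = m ∨ u = x ∨ u = y ∨ u = z ∨ u = J := by
    intro u
    have hsub : ({x, y, z} : Set L) ⊆ ({m, x, y, z, J} : Set L) := by
      intro u hu; simp only [Set.mem_insert_iff, Set.mem_singleton_iff] at hu ⊢; tauto
    have := latticeClosure_min hsub hS
    rw [hgen] at this
    have := this (Set.mem_univ u)
    simpa using this
  -- a minimal non-bottom element is an atom
  have hne : ∃ g : L, g ≠ m := by
    by_cases hx : x = m
    · by_cases hy : y = m
      · exact absurd (hx.trans hy.symm) hxy
      · exact ⟨y, hy⟩
    · exact ⟨x, hx⟩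
  obtain ⟨g, hg⟩ := hne
  have hfin : ({u : L | u ≠ m}).Finite := by
    apply Set.Finite.subset ((((Set.finite_singleton J).insert z).insert y).insert x)
    intro u hu
    rcases hall u with rfl | rfl | rfl | rfl | rfl
    · exact absurd rfl hu
    · simp
    · simp
    · simp
    · simp
  obtain ⟨a, ha, hamin⟩ := hfin.exists_minimal ⟨g, hg⟩
  refine hat a ⟨m, a, Ne.symm ha, ?_⟩
  ext u
  simp only [Set.mem_Iic, Set.mem_insert_iff, Set.mem_singleton_iff]
  constructor
  · intro hu
    by_cases hum : u = m
    · exact Or.inl hum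
    · exact Or.inr (le_antisymm hu (hamin hum hu))
  · rintro (rfl | rfl)
    · exact hmin a
    · exact le_rfl

end Impossible
end Czedli

open Czedli

theorem stmt_1 (n : ℕ) (hn : 2 ≤ n) :
    (∃ (L : Type) (_ : Lattice L) (G : Set L),
        G.ncard = n ∧ GeneratesLat G ∧ IsSelfdual L ∧
        (∀ a : L, ¬ IsAtomOf a)) ↔ 4 ≤ n := by
  constructor
  · rintro ⟨L, _, G, hcard, hgen, hsd, hat⟩
    by_contra h4
    have h23 : n = 2 ∨ n = 3 := by omega
    rcases h23 with rfl | rfl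
    · obtain ⟨x, y, hne, rfl⟩ := Set.ncard_eq_two.1 hcard
      exact no_two hne hgen hat
    · obtain ⟨x, y, z, hxy, hxz, hyz, rfl⟩ := Set.ncard_eq_three.1 hcard
      exact no_three hxy hxz hyz hgen hsd hat
  · intro h4
    classical
    refine ⟨CzL, inferInstance,
      ↑(({CzL.A, CzL.B, CzL.As, CzL.Bs} : Finset CzL) ∪
        (Finset.range (n - 4)).image CzL.V), ?_, ?_, ?_, ?_⟩
    · rw [Set.ncard_coe_finset]
      rw [Finset.card_union_of_disjoint]
      · have h1 : ({CzL.A, CzL.B, CzL.As, CzL.Bs} : Finset CzL).card = 4 := by decide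
        have h2 : ((Finset.range (n - 4)).image CzL.V).card = n - 4 := by
          rw [Finset.card_image_of_injective]
          · exact Finset.card_range _
          · intro a b hab
            injection hab
        omega
      · rw [Finset.disjoint_left]
        intro a ha hb
        obtain ⟨k, _, rfl⟩ := Finset.mem_image.1 hb
        simp at ha
    · apply Set.eq_univ_of_univ_subset
      rw [← CzL.generates]
      apply latticeClosure_mono
      intro u hu
      simp only [Set.mem_insert_iff, Set.mem_singleton_iff] at hu
      simp only [Finset.coe_union, Set.mem_union, Finset.mem_coe, Finset.mem_insert,
        Finset.mem_singleton]
      rcases hu with rfl | rfl | rfl | rfl <;> simp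
    · exact CzL.isSelfdual
    · intro a ha
      exact CzL.noAtoms a ha
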